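/- Let R be a compactly supported absolutely continuous probability measure on R^d with bounded density. Then for each fixed i, the map z -> R(C_i(z) \ C_i(z')) is locally Lipschitz: for every U > 0 there exists a constant L such that R(C_i(z) \ C_i(z')) <= L * ||z - z'|| whenever ||z||, ||z'|| <= U, where C_i(z) is the Laguerre cell determined by distinct points x_1,...,x_N. -/

import Mathlib

open RealInnerProductSpace MeasureTheory

lemma slab_volume_le (d : ℕ) (v : EuclideanSpace ℝ (Fin d)) (hv : v ≠ 0)
    (r a b : ℝ) (hr : 0 ≤ r) :
    volume {y : EuclideanSpace ℝ (Fin d) | ‖y‖ ≤ r ∧ a ≤ ⟪v, y⟫ ∧ ⟪v, y⟫ ≤ b} ≤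
      ENNReal.ofReal ((b - a) / ‖v‖) * ENNReal.ofReal (2 * r) ^ (d - 1) := by
  have hd : 0 < d := by
    rcases Nat.eq_zero_or_pos d with h | h
    · exfalso; apply hv; subst h; exact Subsingleton.elim v 0
    · exact h
  have hvn : (0:ℝ) < ‖v‖ := norm_pos_iff.mpr hv
  set u : EuclideanSpace ℝ (Fin d) := ‖v‖⁻¹ • v with hu_def
  have hu : ‖u‖ = 1 := by
    rw [hu_def, norm_smul, norm_inv, norm_norm, inv_mul_cancel₀ hvn.ne']
  set k0 : Fin d := ⟨0, hd⟩
  have hcard : Module.finrank ℝ (EuclideanSpace ℝ (Fin d)) = Fintype.card (Fin d) := by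
    simp
  have horth : Orthonormal ℝ (({k0} : Set (Fin d)).restrict (fun _ => u)) := by
    constructor
    · intro j; exact hu
    · intro j l hjl
      exfalso
      exact hjl (Subsingleton.elim j l)
  obtain ⟨B, hB⟩ := horth.exists_orthonormalBasis_extension_of_card_eq hcard
  have hBk0 : B k0 = u := hB k0 rfl
  set T : Set (EuclideanSpace ℝ (Fin d)) :=
    WithLp.ofLp ⁻¹' Set.univ.pi (fun k => if k = k0 then Set.Icc (a / ‖v‖) (b / ‖v‖) else Set.Icc (-r) r) with hT
  have hsub : {y : EuclideanSpace ℝ (Fin d) | ‖y‖ ≤ r ∧ a ≤ ⟪v, y⟫ ∧ ⟪v, y⟫ ≤ b} ⊆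
      B.repr ⁻¹' T := by
    rintro y ⟨hy, ha, hb⟩
    have hvy : ⟪v, y⟫ = ‖v‖ * ⟪u, y⟫ := by
      rw [hu_def, real_inner_smul_left]; field_simp
    intro k _
    dsimp only
    by_cases hk : k = k0
    · rw [if_pos hk]
      have : B.repr y k = ⟪u, y⟫ := by rw [B.repr_apply_apply, hk, hBk0]
      rw [this]
      constructor
      · rw [div_le_iff₀ hvn, mul_comm, ← hvy]; exact ha
      · rw [le_div_iff₀ hvn, mul_comm, ← hvy]; exact hb
    · simp only [if_neg hk]
      have : B.repr y k = ⟪B k, y⟫ := B.repr_apply_apply y k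
      have habs : |⟪B k, y⟫| ≤ r := by
        calc |⟪B k, y⟫| ≤ ‖B k‖ * ‖y‖ := abs_real_inner_le_norm _ _
        _ ≤ r := by rw [B.orthonormal.1 k]; simpa using hy
      rw [this]
      exact ⟨neg_le_of_abs_le habs, le_of_abs_le habs⟩
  have hmeasT : MeasurableSet T := (MeasurableSet.univ_pi (fun k => by
    by_cases hk : k = k0 <;> simp [hk, measurableSet_Icc])).preimage (WithLp.measurable_ofLp _ _)
  calc volume {y : EuclideanSpace ℝ (Fin d) | ‖y‖ ≤ r ∧ a ≤ ⟪v, y⟫ ∧ ⟪v, y⟫ ≤ b}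
      ≤ volume (B.repr ⁻¹' T) := measure_mono hsub
    _ = volume T := B.measurePreserving_repr.measure_preimage hmeasT.nullMeasurableSet
    _ ≤ ENNReal.ofReal ((b - a) / ‖v‖) * ENNReal.ofReal (2 * r) ^ (d - 1) := by
        have : volume T = ∏ k : Fin d, volume (if k = k0 then Set.Icc (a / ‖v‖) (b / ‖v‖)
            else Set.Icc (-r) r) := by
          rw [hT]
          rw [← ((EuclideanSpace.volume_preserving_symm_measurableEquiv_toLp (Fin d)).symm).measure_preimage
            (by
              apply MeasurableSet.nullMeasurableSet
              exact (MeasurableSet.univ_pi (fun k => by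
                by_cases hk : k = k0 <;> simp [hk, measurableSet_Icc])).preimage (WithLp.measurable_ofLp _ _))]
          rw [← volume_pi_pi]
          congr 1
        rw [this]
        rw [← Finset.mul_prod_erase Finset.univ _ (Finset.mem_univ k0), if_pos rfl]
        have h1 : volume (Set.Icc (a / ‖v‖) (b / ‖v‖)) = ENNReal.ofReal ((b - a) / ‖v‖) := by
          rw [Real.volume_Icc, ← sub_div]
        have h2 : ∀ k ∈ Finset.univ.erase k0, volume (if k = k0 then Set.Icc (a / ‖v‖) (b / ‖v‖)
            else Set.Icc (-r) r) = ENNReal.ofReal (2 * r) := by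
          intro k hk
          rw [if_neg (Finset.mem_erase.mp hk).1, Real.volume_Icc]
          congr 1; ring
        rw [h1, Finset.prod_congr rfl h2, Finset.prod_const]
        have : (Finset.univ.erase k0).card = d - 1 := by
          rw [Finset.card_erase_of_mem (Finset.mem_univ k0), Finset.card_univ, Fintype.card_fin]
        rw [this]

/-- Laguerre cell C_i(z) -/
noncomputable def Lcell {d N : ℕ} (x : Fin N → EuclideanSpace ℝ (Fin d))
    (z : Fin N → ℝ) (i : Fin N) : Set (EuclideanSpace ℝ (Fin d)) :=
  {y | ∀ j, j ≠ i → (‖x i‖ ^ 2 - ‖x j‖ ^ 2) / 2 - z i + z j ≤ ⟪x i - x j, y⟫}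

/-- for a compactly supported absolutely continuous probability measure R with
bounded density, z ↦ R(C_i(z) \ C_i(z')) is locally Lipschitz: on each ball of radius U there is
a constant L with R(C_i(z) \ C_i(z')) ≤ L ‖z - z'‖. -/
theorem laguerre_cell_measure_locally_lipschitz (d N : ℕ) (hN : 2 ≤ N)
    (x : Fin N → EuclideanSpace ℝ (Fin d)) (hx : Function.Injective x)
    (ρ : EuclideanSpace ℝ (Fin d) → ℝ) (M : ℝ) (hρM : ∀ y, ρ y ≤ M) (hρ0 : ∀ y, 0 ≤ ρ y)
    (Y : Set (EuclideanSpace ℝ (Fin d))) (hY : IsCompact Y) (hsupp : ∀ y ∉ Y, ρ y = 0)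
    (R : Measure (EuclideanSpace ℝ (Fin d))) [IsProbabilityMeasure R]
    (hR : R = volume.withDensity (fun y => ENNReal.ofReal (ρ y)))
    (i : Fin N) (U : ℝ) (hU : 0 < U) :
    ∃ L : ℝ, ∀ z z' : Fin N → ℝ, ‖z‖ ≤ U → ‖z'‖ ≤ U →
      (R (Lcell x z i \ Lcell x z' i)).toReal ≤ L * ‖z - z'‖ := by
  -- basic facts
  have hM : 0 ≤ M := le_trans (hρ0 0) (hρM 0)
  obtain ⟨r₀, hYr₀⟩ := hY.isBounded.subset_closedBall 0
  set r : ℝ := max r₀ 0 with hr_def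
  have hr0 : 0 ≤ r := le_max_right _ _
  have hYr : Y ⊆ Metric.closedBall 0 r :=
    hYr₀.trans (Metric.closedBall_subset_closedBall (le_max_left _ _))
  have hne : (Finset.univ.erase i).Nonempty := by
    have h1 : 1 < Fintype.card (Fin N) := by simpa using lt_of_lt_of_le one_lt_two hN
    obtain ⟨j, hj⟩ := Fintype.exists_ne_of_one_lt_card h1 i
    exact ⟨j, Finset.mem_erase.mpr ⟨hj, Finset.mem_univ j⟩⟩
  set m : ℝ := (Finset.univ.erase i).inf' hne (fun j => ‖x i - x j‖) with hm_def
  have hm : 0 < m := by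
    rw [hm_def, Finset.lt_inf'_iff]
    intro j hj
    have : x i ≠ x j := fun h => (Finset.mem_erase.mp hj).1 (hx h.symm)
    simpa [sub_ne_zero] using this
  have hmle : ∀ j : Fin N, j ≠ i → m ≤ ‖x i - x j‖ := by
    intro j hj
    exact Finset.inf'_le _ (Finset.mem_erase.mpr ⟨hj, Finset.mem_univ j⟩)
  refine ⟨M * N * (2 / m * (2 * r) ^ (d - 1)), ?_⟩
  intro z z' _ _
  set δ : ℝ := ‖z - z'‖ with hδ_def
  have hδ0 : 0 ≤ δ := norm_nonneg _
  -- measurability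
  have hclosed : ∀ (w : Fin N → ℝ), IsClosed (Lcell x w i) := by
    intro w
    have : Lcell x w i = ⋂ j, ⋂ (_ : j ≠ i),
        {y : EuclideanSpace ℝ (Fin d) |
          (‖x i‖ ^ 2 - ‖x j‖ ^ 2) / 2 - w i + w j ≤ ⟪x i - x j, y⟫} := by
      ext y; simp [Lcell]
    rw [this]
    exact isClosed_iInter fun j => isClosed_iInter fun _ =>
      isClosed_le continuous_const (Continuous.inner continuous_const continuous_id)
  set A : Set (EuclideanSpace ℝ (Fin d)) := Lcell x z i \ Lcell x z' i with hA_def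
  have hAmeas : MeasurableSet A :=
    ((hclosed z).measurableSet).diff ((hclosed z').measurableSet)
  have hYmeas : MeasurableSet Y := hY.isClosed.measurableSet
  -- slabs
  set c : ENNReal := ENNReal.ofReal (2 * δ / m) * ENNReal.ofReal (2 * r) ^ (d - 1) with hc_def
  set T : Fin N → Set (EuclideanSpace ℝ (Fin d)) := fun j =>
    if j = i then ∅ else
      {y | ‖y‖ ≤ r ∧ (‖x i‖ ^ 2 - ‖x j‖ ^ 2) / 2 - z i + z j ≤ ⟪x i - x j, y⟫ ∧
        ⟪x i - x j, y⟫ ≤ (‖x i‖ ^ 2 - ‖x j‖ ^ 2) / 2 - z' i + z' j} with hT_def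
  have hsub : Y ∩ A ⊆ ⋃ j, T j := by
    rintro y ⟨hyY, hyA⟩
    have hynorm : ‖y‖ ≤ r := by simpa [Metric.mem_closedBall] using hYr hyY
    obtain ⟨hy1, hy2⟩ := hyA
    have : ∃ j, j ≠ i ∧ ⟪x i - x j, y⟫ < (‖x i‖ ^ 2 - ‖x j‖ ^ 2) / 2 - z' i + z' j := by
      by_contra h
      push_neg at h
      exact hy2 (fun j hj => (h j hj))
    obtain ⟨j, hji, hjlt⟩ := this
    refine Set.mem_iUnion.mpr ⟨j, ?_⟩
    rw [hT_def]
    simp only [if_neg hji]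
    exact ⟨hynorm, hy1 j hji, le_of_lt hjlt⟩
  have hTvol : ∀ j, volume (T j) ≤ c := by
    intro j
    rw [hT_def]
    by_cases hj : j = i
    · simp [hj]
    · simp only [if_neg hj]
      have hvne : x i - x j ≠ 0 := sub_ne_zero.mpr (fun h => hj (hx h).symm)
      refine le_trans (slab_volume_le d (x i - x j) hvne r _ _ hr0) ?_
      rw [hc_def]
      refine mul_le_mul_left (ENNReal.ofReal_le_ofReal ?_) _
      have hba : ((‖x i‖ ^ 2 - ‖x j‖ ^ 2) / 2 - z' i + z' j) -
          ((‖x i‖ ^ 2 - ‖x j‖ ^ 2) / 2 - z i + z j) ≤ 2 * δ := by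
        have h1 : |z i - z' i| ≤ δ := by
          have := norm_le_pi_norm (z - z') i
          simpa [Real.norm_eq_abs] using this
        have h2 : |z' j - z j| ≤ δ := by
          have := norm_le_pi_norm (z - z') j
          rw [Real.norm_eq_abs] at this
          calc |z' j - z j| = |z j - z' j| := abs_sub_comm _ _
          _ ≤ δ := by simpa using this
        have := add_le_add (le_of_abs_le h1) (le_of_abs_le h2)
        linarith
      rcases le_or_gt (((‖x i‖ ^ 2 - ‖x j‖ ^ 2) / 2 - z' i + z' j -
          ((‖x i‖ ^ 2 - ‖x j‖ ^ 2) / 2 - z i + z j))) 0 with h | h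
      · exact le_trans (div_nonpos_iff.mpr (Or.inr ⟨h, norm_nonneg _⟩)) (by positivity)
      · exact div_le_div₀ (by positivity) hba hm (hmle j hj)
  -- measure bound
  have key : R A ≤ ENNReal.ofReal (M * N * (2 / m * (2 * r) ^ (d - 1)) * δ) := by
    rw [hR, withDensity_apply _ hAmeas]
    have step1 : (∫⁻ y in A, ENNReal.ofReal (ρ y)) ≤
        ∫⁻ y in A, Y.indicator (fun _ => ENNReal.ofReal M) y := by
      apply lintegral_mono
      intro y
      dsimp only
      by_cases hy : y ∈ Y
      · rw [Set.indicator_of_mem hy]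
        exact ENNReal.ofReal_le_ofReal (hρM y)
      · rw [hsupp y hy]; simp
    have step2 : (∫⁻ y in A, Y.indicator (fun _ => ENNReal.ofReal M) y) =
        ENNReal.ofReal M * volume (Y ∩ A) := by
      rw [lintegral_indicator hYmeas, Measure.restrict_restrict hYmeas, lintegral_const,
        Measure.restrict_apply_univ]
    have step3 : volume (Y ∩ A) ≤ (N : ENNReal) * c := by
      calc volume (Y ∩ A) ≤ volume (⋃ j, T j) := measure_mono hsub
        _ ≤ ∑' j, volume (T j) := measure_iUnion_le _
        _ = ∑ j, volume (T j) := tsum_fintype _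
        _ ≤ Finset.univ.card • c := Finset.sum_le_card_nsmul _ _ _ (fun j _ => hTvol j)
        _ = (N : ENNReal) * c := by
            rw [nsmul_eq_mul]; simp
    calc (∫⁻ y in A, ENNReal.ofReal (ρ y)) ≤ ENNReal.ofReal M * volume (Y ∩ A) := by
          rw [← step2]; exact step1
      _ ≤ ENNReal.ofReal M * ((N : ENNReal) * c) := by gcongr
      _ = ENNReal.ofReal (M * N * (2 / m * (2 * r) ^ (d - 1)) * δ) := by
          rw [hc_def, ← ENNReal.ofReal_natCast N, ← ENNReal.ofReal_pow (by positivity),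
            ← ENNReal.ofReal_mul (by positivity), ← ENNReal.ofReal_mul (by positivity),
            ← ENNReal.ofReal_mul hM]
          congr 1
          field_simp
  exact ENNReal.toReal_le_of_le_ofReal (by positivity) key
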